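/- Let C ∈ ℝ^{N×N} satisfy C_{kk} ≤ - Σ_{j≠k} |C_{jk}| for every column index k (ℓ¹-dissipativity). Then the spectrum of C over ℂ intersects the imaginary axis at most in {0}, i.e., if iβ is an eigenvalue with β ∈ ℝ then β = 0. -/

import Mathlib

open Finset Matrix

lemma spectrum_transpose_mem {n : Type*} [Fintype n] [DecidableEq n]
    {A : Matrix n n ℂ} {μ : ℂ} (h : μ ∈ spectrum ℂ A) : μ ∈ spectrum ℂ Aᵀ := by
  rw [spectrum.mem_iff] at h ⊢
  intro hu
  apply h
  rw [Matrix.isUnit_iff_isUnit_det] at hu ⊢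
  have : (algebraMap ℂ (Matrix n n ℂ) μ - A)ᵀ = algebraMap ℂ (Matrix n n ℂ) μ - Aᵀ := by
    simp [Matrix.transpose_sub, Matrix.algebraMap_eq_diagonal]
  rw [← this, Matrix.det_transpose] at hu
  exact hu

/-- If a real `N × N` matrix `C` satisfies the column condition
`C k k ≤ - ∑_{j ≠ k} |C j k|` for every `k` (i.e. `C` is `ℓ¹`-dissipative),
then the spectrum of `C` over `ℂ` intersects the imaginary axis at most in `{0}`. -/
theorem stmt_10 (N : ℕ) (C : Matrix (Fin N) (Fin N) ℝ)
    (hdiss : ∀ k, C k k ≤ - ∑ j ∈ univ.erase k, |C j k|) :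
    ∀ β : ℝ, (Complex.I * β) ∈ spectrum ℂ (C.map (Complex.ofReal)) → β = 0 := by
  intro β hβ
  have h1 : (Complex.I * β) ∈ spectrum ℂ (C.map (Complex.ofReal))ᵀ :=
    spectrum_transpose_mem hβ
  have h2 : Module.End.HasEigenvalue (Matrix.toLin' (C.map (Complex.ofReal))ᵀ) (Complex.I * β) := by
    rw [Module.End.hasEigenvalue_iff_mem_spectrum,
      show Matrix.toLin' (C.map (Complex.ofReal))ᵀ
        = Matrix.toLinAlgEquiv (Pi.basisFun ℂ (Fin N)) (C.map (Complex.ofReal))ᵀ from rfl,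
      AlgEquiv.spectrum_eq (Matrix.toLinAlgEquiv <| Pi.basisFun ℂ (Fin N))]
    exact h1
  obtain ⟨k, hk⟩ := eigenvalue_mem_ball h2
  rw [mem_closedBall_iff_norm'] at hk
  have hd : ∀ j, (C.map (Complex.ofReal))ᵀ k j = (C j k : ℂ) := fun j => rfl
  have hsum : ∑ j ∈ Finset.univ.erase k, ‖(C.map (Complex.ofReal))ᵀ k j‖
      = ∑ j ∈ Finset.univ.erase k, |C j k| := by
    refine Finset.sum_congr rfl fun j _ => ?_
    rw [hd j, Complex.norm_real, Real.norm_eq_abs]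
  have hnorm : ‖(C.map (Complex.ofReal))ᵀ k k - Complex.I * β‖
      = Real.sqrt ((C k k)^2 + β^2) := by
    rw [hd k]
    rw [Complex.norm_def, Complex.normSq_apply]
    congr 1
    simp [Complex.ofReal_re, Complex.ofReal_im]
    ring
  rw [hnorm, hsum] at hk
  have h3 : Real.sqrt ((C k k)^2 + β^2) ≤ -(C k k) := hk.trans (by linarith [hdiss k])
  have h4 : (C k k)^2 + β^2 ≤ (C k k)^2 := by
    have := Real.sq_sqrt (by positivity : (0:ℝ) ≤ (C k k)^2 + β^2)
    nlinarith [Real.sqrt_nonneg ((C k k)^2 + β^2)]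
  nlinarith
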